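/- Let q > 2 and define u : [−1,1] → ℝ by u(x) = ((q−1)/q)( |x|^{q/(q−1)} − 1 ), so that u'(x) = sign(x)|x|^{1/(q−1)}. Then for every α with 1/(q−1) < α ≤ 1 and every δ ∈ (0,1], the derivative u' is not α-Hölder continuous on [−δ, δ]; that is, there is no constant C such that |u'(x) − u'(y)| ≤ C|x−y|^α for all x, y ∈ [−δ, δ]. Consequently, the C^{1,1/(q−1)} regularity of minimizers of ∫_{−1}^{1}(|v'|^q/q + v)dx over convex functions with zero boundary values is optimal for q > 2. -/

import Mathlib

noncomputable def uq (q : ℝ) (x : ℝ) : ℝ := (q - 1) / q * (|x| ^ (q / (q - 1)) - 1)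

lemma hasDerivAt_abs_rpow' {p : ℝ} (hp : 1 < p) (x : ℝ) :
    HasDerivAt (fun y : ℝ => |y| ^ p) (p * Real.sign x * |x| ^ (p - 1)) x := by
  have h := hasDerivAt_abs_rpow x hp
  convert h using 1
  rcases eq_or_ne x 0 with rfl | hx
  · simp
  · have hax : 0 < |x| := abs_pos.mpr hx
    rw [show p - 1 = (p - 2) + 1 by ring, Real.rpow_add hax, Real.rpow_one]
    calc p * Real.sign x * (|x| ^ (p - 2) * |x|)
        = p * |x| ^ (p - 2) * (Real.sign x * |x|) := by ring
      _ = p * |x| ^ (p - 2) * x := by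
          rcases lt_or_gt_of_ne hx with h | h
          · rw [Real.sign_of_neg h, abs_of_neg h]; ring
          · rw [Real.sign_of_pos h, abs_of_pos h]; ring

lemma deriv_uq (q : ℝ) (hq : 2 < q) (x : ℝ) :
    deriv (uq q) x = Real.sign x * |x| ^ (1 / (q - 1)) := by
  have hq1 : (0:ℝ) < q - 1 := by linarith
  have hq0 : (0:ℝ) < q := by linarith
  have hp : 1 < q / (q - 1) := by
    rw [lt_div_iff₀ hq1]; linarith
  have H : HasDerivAt (uq q)
      ((q - 1) / q * (q / (q - 1) * Real.sign x * |x| ^ (q / (q - 1) - 1))) x :=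
    ((hasDerivAt_abs_rpow' hp x).sub_const 1).const_mul ((q - 1) / q)
  have hpm : q / (q - 1) - 1 = 1 / (q - 1) := by field_simp; ring
  rw [H.deriv, hpm]
  field_simp

theorem optimal_regularity_q_gt_two (q : ℝ) (hq : 2 < q) :
    (∀ x ∈ Set.Ioo (-1 : ℝ) 1, deriv (uq q) x = Real.sign x * |x| ^ (1 / (q - 1))) ∧
    ∀ α : ℝ, 1 / (q - 1) < α → α ≤ 1 → ∀ δ : ℝ, 0 < δ → δ ≤ 1 →
      ¬ ∃ C : ℝ, ∀ x ∈ Set.Icc (-δ) δ, ∀ y ∈ Set.Icc (-δ) δ,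
          |deriv (uq q) x - deriv (uq q) y| ≤ C * |x - y| ^ α := by
  have hq1 : (0:ℝ) < q - 1 := by linarith
  refine ⟨fun x _ => deriv_uq q hq x, ?_⟩
  intro α hα1 hα2 δ hδ0 hδ1 ⟨C, hC⟩
  set β : ℝ := 1 / (q - 1) with hβ
  have hβ0 : 0 < β := by positivity
  have hαβ : 0 < α - β := by linarith
  set C' : ℝ := max C 1 with hC'
  have hC'1 : (1:ℝ) ≤ C' := le_max_right _ _
  have hC'0 : (0:ℝ) < C' := by linarith
  set t0 : ℝ := (2 * C') ^ (-(1 / (α - β))) with ht0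
  have ht00 : 0 < t0 := Real.rpow_pos_of_pos (by linarith) _
  set t : ℝ := min (δ / 2) t0 with ht
  have ht0' : 0 < t := lt_min (by linarith) ht00
  have htδ : t ≤ δ := le_trans (min_le_left _ _) (by linarith)
  have htmem : t ∈ Set.Icc (-δ) δ := ⟨by linarith, htδ⟩
  have h0mem : (0:ℝ) ∈ Set.Icc (-δ) δ := ⟨by linarith, by linarith⟩
  have hkey := hC t htmem 0 h0mem
  rw [deriv_uq q hq t, deriv_uq q hq 0] at hkey
  have hsgn : Real.sign t = 1 := Real.sign_of_pos ht0'
  simp only [Real.sign_zero, zero_mul, sub_zero] at hkey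
  rw [hsgn, one_mul, abs_of_pos ht0', ← hβ,
    abs_of_nonneg (Real.rpow_nonneg ht0'.le β)] at hkey
  -- hkey : 1 * t ^ β ≤ C * t ^ α
  have htβ : (0:ℝ) < t ^ β := Real.rpow_pos_of_pos ht0' _
  have hCC' : C * t ^ α ≤ C' * t ^ α := by
    apply mul_le_mul_of_nonneg_right (le_max_left _ _)
      (Real.rpow_nonneg ht0'.le α)
  have hsplit : t ^ α = t ^ β * t ^ (α - β) := by
    rw [← Real.rpow_add ht0']; ring_nf
  have h1 : 1 ≤ C' * t ^ (α - β) := by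
    have : t ^ β * 1 ≤ t ^ β * (C' * t ^ (α - β)) := by
      calc t ^ β * 1 = t ^ β := by ring
        _ ≤ C * t ^ α := by simpa using hkey
        _ ≤ C' * t ^ α := hCC'
        _ = t ^ β * (C' * t ^ (α - β)) := by rw [hsplit]; ring
    exact le_of_mul_le_mul_left this htβ
  have h2C : (0:ℝ) < 2 * C' := by linarith
  have ht0pow : t0 ^ (α - β) = 1 / (2 * C') := by
    rw [ht0, ← Real.rpow_mul h2C.le]
    rw [show -(1 / (α - β)) * (α - β) = -1 by field_simp]
    rw [Real.rpow_neg_one]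
    exact (one_div _).symm
  have htle : t ^ (α - β) ≤ 1 / (2 * C') := by
    rw [← ht0pow]
    exact Real.rpow_le_rpow ht0'.le (min_le_right _ _) hαβ.le
  have : C' * t ^ (α - β) ≤ C' * (1 / (2 * C')) :=
    mul_le_mul_of_nonneg_left htle hC'0.le
  have hlt : C' * (1 / (2 * C')) = 1 / 2 := by field_simp
  linarith
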